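/- Let q be an even natural number and let φ₁,…,φ_{q+1} ∈ ℝ. Define the 2×2 unitary product M(θ) = e^{iφ_{q+1}Z} · ∏_{k=1}^{q/2} ( e^{−iθX} e^{iφ_{2k}Z} · e^{iθX} e^{iφ_{2k−1}Z} ), where X and Z are the Pauli matrices. Then there exist polynomials B, D ∈ ℂ[x] with deg B ≤ q, deg D ≤ q−1, B even, D odd, and |B(x)|² + (1−x²)|D(x)|² = 1 for all x ∈ [−1,1], such that for all θ ∈ [−π,π], the (1,1) entry of M(θ) equals B(cos θ) and the (1,2) entry equals i·sin θ·D(cos θ). -/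

import Mathlib

open scoped Matrix ComplexOrder

/-- `e^{iφZ}` as an explicit 2×2 matrix. -/
noncomputable def expZ (φ : ℝ) : Matrix (Fin 2) (Fin 2) ℂ :=
  !![Complex.exp (φ * Complex.I), 0; 0, Complex.exp (-(φ * Complex.I))]

/-- `e^{iθX}` as an explicit 2×2 matrix. -/
noncomputable def expX (θ : ℝ) : Matrix (Fin 2) (Fin 2) ℂ :=
  !![Complex.cos θ, Complex.I * Complex.sin θ;
     Complex.I * Complex.sin θ, Complex.cos θ]

/-- The QSP pulse sequence
`M(θ) = e^{iφ_{q+1}Z} ∏_{k=1}^{q/2} e^{-iθX} e^{iφ_{2k}Z} e^{iθX} e^{iφ_{2k-1}Z}`. -/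
noncomputable def qspSeq (q : ℕ) (φ : ℕ → ℝ) (θ : ℝ) : Matrix (Fin 2) (Fin 2) ℂ :=
  expZ (φ (q + 1)) *
    (List.ofFn fun k : Fin (q / 2) =>
      expX (-θ) * expZ (φ (2 * (k : ℕ) + 2)) * expX θ * expZ (φ (2 * (k : ℕ) + 1))).prod

lemma pulse (φa φb θ : ℝ) :
    expX (-θ) * expZ φa * expX θ * expZ φb =
    !![Complex.exp (φb * Complex.I) * (Complex.exp (-(φa * Complex.I)) +
          (Complex.exp (φa * Complex.I) - Complex.exp (-(φa * Complex.I))) * Complex.cos θ ^ 2),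
       Complex.I * Complex.sin θ * (Complex.exp (-(φb * Complex.I)) *
          (Complex.exp (φa * Complex.I) - Complex.exp (-(φa * Complex.I))) * Complex.cos θ);
       Complex.I * Complex.sin θ * (Complex.exp (φb * Complex.I) *
          (Complex.exp (-(φa * Complex.I)) - Complex.exp (φa * Complex.I)) * Complex.cos θ),
       Complex.exp (-(φb * Complex.I)) * (Complex.exp (φa * Complex.I) +
          (Complex.exp (-(φa * Complex.I)) - Complex.exp (φa * Complex.I)) * Complex.cos θ ^ 2)] := by
  have hs := Complex.sin_sq_add_cos_sq (θ : ℂ)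
  have hI := Complex.I_sq
  set a := Complex.exp (φa * Complex.I)
  set a' := Complex.exp (-(φa * Complex.I))
  set b := Complex.exp (φb * Complex.I)
  set b' := Complex.exp (-(φb * Complex.I))
  ext i j
  fin_cases i <;> fin_cases j <;>
    simp [expX, expZ, Matrix.mul_apply, Fin.sum_univ_two]
  · linear_combination (a' * b) * hs + (-(Complex.sin (θ:ℂ) ^ 2 * a' * b)) * hI
  · linear_combination 0 * hs
  · linear_combination 0 * hs
  · linear_combination (a * b') * hs + (-(Complex.sin (θ:ℂ) ^ 2 * a * b')) * hI

open Polynomial in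
lemma odd_ne_zero_natDegree {B : Polynomial ℂ}
    (hodd : ∀ x : ℂ, B.eval (-x) = -B.eval x) (hB : B ≠ 0) : 1 ≤ B.natDegree := by
  by_contra h
  push_neg at h
  have h0 : B.natDegree = 0 := by omega
  have := Polynomial.eq_C_of_natDegree_eq_zero h0
  have h1 := hodd 0
  rw [neg_zero] at h1
  have h1' : B.eval 0 = 0 := by linear_combination h1 / 2
  apply hB
  rw [this, Polynomial.coeff_zero_eq_eval_zero, h1', map_zero]

open Polynomial in
lemma qsp_key (n : ℕ) (φ : ℕ → ℝ) :
    ∃ A B C D : Polynomial ℂ,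
      A.natDegree ≤ 2*n ∧ B.natDegree ≤ 2*n - 1 ∧ C.natDegree ≤ 2*n - 1 ∧ D.natDegree ≤ 2*n ∧
      (∀ x : ℂ, A.eval (-x) = A.eval x) ∧
      (∀ x : ℂ, B.eval (-x) = -B.eval x) ∧
      (∀ x : ℂ, C.eval (-x) = -C.eval x) ∧
      (∀ x : ℂ, D.eval (-x) = D.eval x) ∧
      ∀ θ : ℝ,
        (List.ofFn fun k : Fin n =>
          expX (-θ) * expZ (φ (2 * (k:ℕ) + 2)) * expX θ * expZ (φ (2 * (k:ℕ) + 1))).prod =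
        !![A.eval (Complex.cos θ), Complex.I * Complex.sin θ * B.eval (Complex.cos θ);
           Complex.I * Complex.sin θ * C.eval (Complex.cos θ), D.eval (Complex.cos θ)] := by
  induction n with
  | zero =>
      refine ⟨1, 0, 0, 1, by simp, by simp, by simp, by simp, by simp, by simp, by simp, by simp,
        fun θ => ?_⟩
      simp [Matrix.one_fin_two]
  | succ n ih =>
      obtain ⟨A, B, C, D, hAd, hBd, hCd, hDd, hAe, hBe, hCe, hDe, hM⟩ := ih
      set a := Complex.exp (φ (2*n+2) * Complex.I) with ha
      set a' := Complex.exp (-(φ (2*n+2) * Complex.I)) with ha'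
      set b := Complex.exp (φ (2*n+1) * Complex.I) with hb
      set b' := Complex.exp (-(φ (2*n+1) * Complex.I)) with hb'
      set p : Polynomial ℂ := Polynomial.C (b*a') + Polynomial.C (b*(a-a')) * X^2 with hp
      set r : Polynomial ℂ := Polynomial.C (b'*(a-a')) * X with hr
      set t : Polynomial ℂ := Polynomial.C (b*(a'-a)) * X with ht
      set u : Polynomial ℂ := Polynomial.C (b'*a) + Polynomial.C (b'*(a'-a)) * X^2 with hu
      have hpd : p.natDegree ≤ 2 := by rw [hp]; compute_degree
      have hrd : r.natDegree ≤ 1 := by rw [hr]; compute_degree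
      have htd : t.natDegree ≤ 1 := by rw [ht]; compute_degree
      have hud : u.natDegree ≤ 2 := by rw [hu]; compute_degree
      have hxd : ((1 : Polynomial ℂ) - X^2).natDegree ≤ 2 := by compute_degree
      have hBn : B = 0 ∨ 1 ≤ n := by
        by_cases hB0 : B = 0
        · exact Or.inl hB0
        · right
          have := odd_ne_zero_natDegree hBe hB0
          omega
      have hCn : C = 0 ∨ 1 ≤ n := by
        by_cases hC0 : C = 0
        · exact Or.inl hC0
        · right
          have := odd_ne_zero_natDegree hCe hC0
          omega
      refine ⟨A*p - (1 - X^2)*B*t, A*r + B*u, C*p + D*t, -((1 - X^2)*C*r) + D*u,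
        ?_, ?_, ?_, ?_, ?_, ?_, ?_, ?_, ?_⟩
      · refine le_trans (natDegree_sub_le _ _) (max_le ?_ ?_)
        · exact le_trans natDegree_mul_le (by omega)
        · rcases hBn with rfl | hn
          · simp
          · refine le_trans natDegree_mul_le ?_
            have := natDegree_mul_le (p := (1 : Polynomial ℂ) - X^2) (q := B)
            omega
      · refine le_trans (natDegree_add_le _ _) (max_le ?_ ?_)
        · exact le_trans natDegree_mul_le (by omega)
        · rcases hBn with rfl | hn
          · simp
          · exact le_trans natDegree_mul_le (by omega)
      · refine le_trans (natDegree_add_le _ _) (max_le ?_ ?_)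
        · rcases hCn with rfl | hn
          · simp
          · exact le_trans natDegree_mul_le (by omega)
        · exact le_trans natDegree_mul_le (by omega)
      · refine le_trans (natDegree_add_le _ _) (max_le ?_ ?_)
        · rw [natDegree_neg]
          rcases hCn with rfl | hn
          · simp
          · refine le_trans natDegree_mul_le ?_
            have := natDegree_mul_le (p := (1 : Polynomial ℂ) - X^2) (q := C)
            omega
        · exact le_trans natDegree_mul_le (by omega)
      · intro x
        simp only [hp, ht, eval_sub, eval_add, eval_mul, eval_one, eval_pow, eval_X, eval_C,
          hAe x, hBe x]
        ring
      · intro x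
        simp only [hr, hu, eval_add, eval_mul, eval_pow, eval_X, eval_C, hAe x, hBe x]
        ring
      · intro x
        simp only [hp, ht, eval_add, eval_mul, eval_pow, eval_X, eval_C, hCe x, hDe x]
        ring
      · intro x
        simp only [hr, hu, eval_add, eval_neg, eval_sub, eval_mul, eval_one, eval_pow, eval_X,
          eval_C, hCe x, hDe x]
        ring
      · intro θ
        have hofn : (List.ofFn fun k : Fin (n+1) =>
            expX (-θ) * expZ (φ (2 * (k:ℕ) + 2)) * expX θ * expZ (φ (2 * (k:ℕ) + 1))) =
            (List.ofFn fun k : Fin n =>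
              expX (-θ) * expZ (φ (2 * (k:ℕ) + 2)) * expX θ * expZ (φ (2 * (k:ℕ) + 1))).concat
              (expX (-θ) * expZ (φ (2*n+2)) * expX θ * expZ (φ (2*n+1))) := by
          rw [List.ofFn_succ']
          simp
        rw [hofn, List.prod_concat, hM θ, pulse]
        have hs := Complex.sin_sq_add_cos_sq (θ : ℂ)
        have hI := Complex.I_sq
        set c := Complex.cos (θ : ℂ)
        set s := Complex.sin (θ : ℂ)
        ext i j
        fin_cases i <;> fin_cases j <;>
          simp [Matrix.mul_apply, Fin.sum_univ_two, hp, hr, ht, hu, ← ha, ← ha', ← hb, ← hb']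
        · linear_combination (-(B.eval c * (b*(a'-a)*c))) * hs +
            (s^2 * B.eval c * (b*(a'-a)*c)) * hI
        · linear_combination 0 * hs
        · linear_combination 0 * hs
        · linear_combination (-(C.eval c * (b'*(a-a')*c))) * hs +
            (s^2 * C.eval c * (b'*(a-a')*c)) * hI

lemma expZ_mem (φ : ℝ) : expZ φ ∈ Matrix.unitaryGroup (Fin 2) ℂ := by
  rw [Matrix.mem_unitaryGroup_iff]
  ext i j
  fin_cases i <;> fin_cases j <;>
    simp [expZ, Matrix.mul_apply, Fin.sum_univ_two, Matrix.star_apply,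
      ← Complex.exp_conj, map_mul, Complex.conj_I, Complex.conj_ofReal, ← Complex.exp_add,
      Matrix.one_apply]

lemma expX_mem (θ : ℝ) : expX θ ∈ Matrix.unitaryGroup (Fin 2) ℂ := by
  rw [Matrix.mem_unitaryGroup_iff]
  have hs : (Real.sin θ : ℂ)^2 + (Real.cos θ : ℂ)^2 = 1 := by
    exact_mod_cast Real.sin_sq_add_cos_sq θ
  have hI := Complex.I_sq
  ext i j
  fin_cases i <;> fin_cases j <;>
    simp [expX, Matrix.mul_apply, Fin.sum_univ_two, Matrix.star_apply,
      ← Complex.ofReal_cos, ← Complex.ofReal_sin, Complex.conj_ofReal, map_mul,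
      Complex.conj_I, Matrix.one_apply]
  · linear_combination hs + (-(Real.sin θ : ℂ)^2) * hI
  · linear_combination 0 * hs
  · linear_combination 0 * hs
  · linear_combination hs + (-(Real.sin θ : ℂ)^2) * hI

lemma qsp_mem (q : ℕ) (φ : ℕ → ℝ) (θ : ℝ) :
    qspSeq q φ θ ∈ Matrix.unitaryGroup (Fin 2) ℂ := by
  apply mul_mem (expZ_mem _)
  apply Submonoid.list_prod_mem
  intro x hx
  rw [List.mem_ofFn] at hx
  obtain ⟨k, rfl⟩ := hx
  exact mul_mem (mul_mem (mul_mem (expX_mem _) (expZ_mem _)) (expX_mem _)) (expZ_mem _)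

lemma qsp_row (q : ℕ) (φ : ℕ → ℝ) (θ : ℝ) :
    qspSeq q φ θ 0 0 * (starRingEnd ℂ) (qspSeq q φ θ 0 0) +
      qspSeq q φ θ 0 1 * (starRingEnd ℂ) (qspSeq q φ θ 0 1) = 1 := by
  have h := (Matrix.mem_unitaryGroup_iff).mp (qsp_mem q φ θ)
  have h00 : (qspSeq q φ θ * star (qspSeq q φ θ)) 0 0 = (1 : Matrix (Fin 2) (Fin 2) ℂ) 0 0 := by
    rw [h]
  simpa [Matrix.mul_apply, Fin.sum_univ_two, Matrix.star_apply, Matrix.one_apply] using h00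

open Polynomial in
theorem stmt_18 (q : ℕ) (hq : Even q) (φ : ℕ → ℝ) :
    ∃ B D : Polynomial ℂ,
      B.natDegree ≤ q ∧ D.natDegree ≤ q - 1 ∧
      (∀ x : ℂ, B.eval (-x) = B.eval x) ∧
      (∀ x : ℂ, D.eval (-x) = -D.eval x) ∧
      (∀ x : ℝ, x ∈ Set.Icc (-1 : ℝ) 1 →
        ‖B.eval (x : ℂ)‖ ^ 2 +
          (1 - x ^ 2) * ‖D.eval (x : ℂ)‖ ^ 2 = 1) ∧
      ∀ θ : ℝ, θ ∈ Set.Icc (-Real.pi) Real.pi →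
        qspSeq q φ θ 0 0 = B.eval ((Real.cos θ : ℝ) : ℂ) ∧
        qspSeq q φ θ 0 1 = Complex.I * (Real.sin θ : ℝ) * D.eval ((Real.cos θ : ℝ) : ℂ) := by
  obtain ⟨m, hm⟩ := hq
  have h2n : 2 * (q / 2) = q := by omega
  obtain ⟨A, Bp, Cp, Dp, hAd, hBd, _, _, hAe, hBe, _, _, hM⟩ := qsp_key (q/2) φ
  set c0 := Complex.exp (φ (q+1) * Complex.I) with hc0
  have hE : ∀ θ : ℝ, qspSeq q φ θ 0 0 = c0 * A.eval (Complex.cos θ) ∧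
      qspSeq q φ θ 0 1 = c0 * (Complex.I * Complex.sin θ * Bp.eval (Complex.cos θ)) := by
    intro θ
    unfold qspSeq
    rw [hM θ]
    constructor <;> simp [expZ, Matrix.mul_apply, Fin.sum_univ_two, hc0]
  have habs0 : ‖c0‖ = 1 := by
    rw [hc0, Complex.norm_exp]
    simp
  refine ⟨Polynomial.C c0 * A, Polynomial.C c0 * Bp, ?_, ?_, ?_, ?_, ?_, ?_⟩
  · refine le_trans natDegree_mul_le ?_
    simp only [natDegree_C, zero_add]
    omega
  · refine le_trans natDegree_mul_le ?_
    simp only [natDegree_C, zero_add]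
    omega
  · intro x; simp [hAe x]
  · intro x; simp [hBe x]
  · intro x hx
    set θ := Real.arccos x with hθ
    have hcos : Real.cos θ = x := Real.cos_arccos hx.1 hx.2
    have hsin2 : Real.sin θ ^ 2 = 1 - x^2 := by rw [Real.sin_sq, hcos]
    have hrow := qsp_row q φ θ
    rw [(hE θ).1, (hE θ).2] at hrow
    have hcc : Complex.cos (θ : ℂ) = (x : ℂ) := by
      rw [← Complex.ofReal_cos, hcos]
    rw [hcc] at hrow
    have habs : ‖c0 * A.eval (x:ℂ)‖ ^ 2 +
        ‖c0 * (Complex.I * Complex.sin θ * Bp.eval (x:ℂ))‖ ^ 2 = 1 := by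
      have h1 : (Complex.normSq (c0 * A.eval (x:ℂ)) : ℂ) +
          (Complex.normSq (c0 * (Complex.I * Complex.sin θ * Bp.eval (x:ℂ))) : ℂ) = 1 := by
        rw [← Complex.mul_conj, ← Complex.mul_conj]
        exact hrow
      have h2 : (Complex.normSq (c0 * A.eval (x:ℂ))) +
          (Complex.normSq (c0 * (Complex.I * Complex.sin θ * Bp.eval (x:ℂ)))) = 1 := by
        exact_mod_cast h1
      rw [Complex.sq_norm, Complex.sq_norm]
      exact h2
    rw [norm_mul, norm_mul, habs0, one_mul, one_mul, norm_mul, norm_mul, Complex.norm_I, one_mul,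
      ← Complex.ofReal_sin, Complex.norm_real, Real.norm_eq_abs] at habs
    simp only [Polynomial.eval_mul, Polynomial.eval_C, norm_mul, habs0, one_mul]
    rw [mul_pow, sq_abs, hsin2] at habs
    linarith [habs]
  · intro θ _
    obtain ⟨h0, h1⟩ := hE θ
    constructor
    · rw [h0, Complex.ofReal_cos]
      simp
    · rw [h1, Complex.ofReal_cos, Complex.ofReal_sin]
      simp only [Polynomial.eval_mul, Polynomial.eval_C]
      ring
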